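/- If G = ({1,…,n}, E) is a 12-representable labeled graph, then G is a comparability graph: orienting each edge ab with a < b from a to b yields a transitive orientation, i.e., if a < b < c with ab ∈ E and bc ∈ E then ac ∈ E. -/

import Mathlib

/-- A word has no 12-match iff no two consecutive letters form a strictly
increasing pair, i.e. the word is weakly decreasing at each step. -/
def NoMatch12 (w : List ℕ) : Prop := w.Chain' (fun a b => b ≤ a)

/-- `w` 12-represents the labeled graph with vertex set `V ⊂ ℕ` and edge relation
`E`: every vertex occurs in `w`, all letters of `w` are vertices, and for all
distinct vertices `x, y`: `xy` is an edge iff the subsequence of `w` consisting of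
occurrences of `x` and `y` has no 12-match. -/
def Rep12 (V : Finset ℕ) (E : ℕ → ℕ → Prop) (w : List ℕ) : Prop :=
  (∀ v ∈ V, v ∈ w) ∧ (∀ a ∈ w, a ∈ V) ∧
    ∀ x ∈ V, ∀ y ∈ V, x ≠ y →
      (E x y ↔ NoMatch12 (w.filter (fun a => a = x ∨ a = y)))

/-- If `[a,c]` is a sublist of `w` and `b ∈ w` with `b ≠ a`, `b ≠ c`,
then `[a,b]` or `[b,c]` is a sublist of `w`. -/
lemma between_aux {a b c : ℕ} (hba : b ≠ a) :
    ∀ w : List ℕ, [a, c].Sublist w → b ∈ w →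
      [a, b].Sublist w ∨ [b, c].Sublist w := by
  intro w
  induction w with
  | nil => intro hs hb; simp at hb
  | cons x t ih =>
    intro hs hb
    cases hs with
    | cons _ h =>
      rcases List.mem_cons.mp hb with rfl | hbt
      · have hc : c ∈ t := h.subset (by simp)
        exact Or.inr (List.cons_sublist_cons.mpr (List.singleton_sublist.mpr hc))
      · rcases ih h hbt with h' | h'
        · exact Or.inl (h'.trans (List.sublist_cons_self x t))
        · exact Or.inr (h'.trans (List.sublist_cons_self x t))
    | cons_cons _ h =>
      have hbt : b ∈ t := by
        rcases List.mem_cons.mp hb with rfl | hbt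
        · exact absurd rfl hba
        · exact hbt
      exact Or.inl (List.cons_sublist_cons.mpr (List.singleton_sublist.mpr hbt))

/-- From a No-12-match on the pair `{x,y}` (as a filter of `w`) with `x < y`,
the pattern `[x, y]` cannot occur as a sublist of `w`. -/
lemma no_sub_of_nomatch {x y : ℕ} (hxy : x < y) {w : List ℕ}
    (hnm : NoMatch12 (w.filter (fun a => a = x ∨ a = y))) :
    ¬ [x, y].Sublist w := by
  intro hs
  have h1 : [x, y].filter (fun a => a = x ∨ a = y) = [x, y] := by
    simp [List.filter]
  have h2 : [x, y].Sublist (w.filter (fun a => a = x ∨ a = y)) := by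
    have := List.Sublist.filter (fun a => decide (a = x ∨ a = y)) hs
    simpa [h1] using this
  have hp : List.Pairwise (fun a b => b ≤ a)
      (w.filter (fun a => a = x ∨ a = y)) := by
    have : List.Chain' (· ≥ ·) (w.filter (fun a => a = x ∨ a = y)) := hnm
    exact List.isChain_iff_pairwise.mp this
  have := List.pairwise_iff_forall_sublist.mp hp h2
  omega

/-- every 12-representable labeled graph on `{1,…,n}` is a
comparability graph: orienting each edge from its smaller to its larger endpoint
is a transitive orientation. -/
theorem stmt_14 (n : ℕ) (E : ℕ → ℕ → Prop) (hsym : Symmetric E)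
    (h : ∃ w, Rep12 (Finset.Icc 1 n) E w) :
    ∀ a ∈ Finset.Icc 1 n, ∀ b ∈ Finset.Icc 1 n, ∀ c ∈ Finset.Icc 1 n,
      a < b → b < c → E a b → E b c → E a c := by
  obtain ⟨w, hall, hmem, hrep⟩ := h
  intro a ha b hb c hc hab hbc hEab hEbc
  have hnab : NoMatch12 (w.filter (fun z => z = a ∨ z = b)) :=
    (hrep a ha b hb (by omega)).mp hEab
  have hnbc : NoMatch12 (w.filter (fun z => z = b ∨ z = c)) :=
    (hrep b hb c hc (by omega)).mp hEbc
  have hns_ab : ¬ [a, b].Sublist w := no_sub_of_nomatch hab hnab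
  have hns_bc : ¬ [b, c].Sublist w := no_sub_of_nomatch hbc hnbc
  have hbw : b ∈ w := hall b hb
  -- show no [a,c] pattern in w
  have hns_ac : ¬ [a, c].Sublist w := by
    intro hs
    rcases between_aux (by omega : b ≠ a) w hs hbw with h' | h'
    · exact hns_ab h'
    · exact hns_bc h'
  refine (hrep a ha c hc (by omega)).mpr ?_
  show List.Chain' (· ≥ ·) (w.filter (fun z => z = a ∨ z = c))
  refine List.isChain_iff_pairwise.mpr ?_
  rw [List.pairwise_iff_forall_sublist]
  intro x y hxy
  have hmemx : x ∈ w.filter (fun z => z = a ∨ z = c) := hxy.subset (by simp)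
  have hmemy : y ∈ w.filter (fun z => z = a ∨ z = c) := hxy.subset (by simp)
  have hx : x = a ∨ x = c := by
    have := List.of_mem_filter hmemx; simpa using this
  have hy : y = a ∨ y = c := by
    have := List.of_mem_filter hmemy; simpa using this
  rcases hx with rfl | rfl <;> rcases hy with rfl | rfl
  · exact le_refl _
  · -- x = a, y = c : derive [a,c] sublist of w, contradiction
    exfalso
    apply hns_ac
    exact hxy.trans (List.filter_sublist (l := w))
  · omega
  · exact le_refl _
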